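/- For the problem of estimating the mean of a distribution on [0,1] from n iid observations, the estimator d₀(X) = (μ + √n · X̄)/(1 + √n) satisfies: for every prior π with ∫ Ψ(P) dπ(P) = μ, the Bayes risk r(d₀, π) = ∫ E_P[(d₀(X) − Ψ(P))²] dπ(P) is at most μ(1−μ)/(1+√n)², with equality when π is supported on Bernoulli distributions. -/

import Mathlib

open MeasureTheory

/-- The Bernoulli distribution on `ℝ` with success probability `θ`. -/
noncomputable def bern (θ : ℝ) : Measure ℝ :=
  ENNReal.ofReal (1 - θ) • Measure.dirac 0 + ENNReal.ofReal θ • Measure.dirac 1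

lemma pi_prod_integral {ι X : Type*} [Fintype ι] [MeasurableSpace X] (P : Measure X)
    [IsProbabilityMeasure P] (f : ι → X → ℝ) :
    ∫ x : ι → X, ∏ i, f i (x i) ∂(Measure.pi fun _ => P) = ∏ i, ∫ x, f i x ∂P := by
  letI : MeasureSpace X := ⟨P⟩
  haveI : SigmaFinite (volume : Measure X) := (inferInstance : SigmaFinite P)
  exact integral_fintype_prod_eq_prod (μ := fun _ => P) f

lemma prod_two {n : ℕ} {i j : Fin n} (hij : i ≠ j) (g : Fin n → ℝ) :
    ∏ k, (if k = i then g k else if k = j then g k else 1) = g i * g j := by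
  rw [← Finset.mul_prod_erase Finset.univ _ (Finset.mem_univ i), if_pos rfl,
    ← Finset.mul_prod_erase _ _ (Finset.mem_erase.2 ⟨Ne.symm hij, Finset.mem_univ j⟩),
    if_neg (Ne.symm hij), if_pos rfl, Finset.prod_eq_one, mul_one]
  intro k hk
  obtain ⟨hkj, hk2⟩ := Finset.mem_erase.1 hk
  obtain ⟨hki, -⟩ := Finset.mem_erase.1 hk2
  rw [if_neg hki, if_neg hkj]

lemma ae_mem_Icc (P : Measure ℝ) (hsupp : P ((Set.Icc (0:ℝ) 1)ᶜ) = 0) :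
    ∀ᵐ x ∂P, x ∈ Set.Icc (0:ℝ) 1 := mem_ae_iff.2 hsupp

section piP
variable {n : ℕ} (P : Measure ℝ) [IsProbabilityMeasure P]

lemma ae_pi_mem (hsupp : P ((Set.Icc (0:ℝ) 1)ᶜ) = 0) :
    ∀ᵐ x ∂(Measure.pi fun _ : Fin n => P), ∀ i, x i ∈ Set.Icc (0:ℝ) 1 := by
  have hIcc : P (Set.Icc (0:ℝ) 1) = 1 := (prob_compl_eq_zero_iff measurableSet_Icc).1 hsupp
  have hbox : (Measure.pi fun _ : Fin n => P) (Set.pi Set.univ fun _ => Set.Icc (0:ℝ) 1) = 1 := by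
    rw [Measure.pi_pi]; simp [hIcc]
  have hcompl : (Measure.pi fun _ : Fin n => P) (Set.pi Set.univ fun _ => Set.Icc (0:ℝ) 1)ᶜ = 0 :=
    (prob_compl_eq_zero_iff (MeasurableSet.univ_pi fun _ => measurableSet_Icc)).2 hbox
  have h : ∀ᵐ x ∂(Measure.pi fun _ : Fin n => P), x ∈ Set.pi Set.univ fun _ => Set.Icc (0:ℝ) 1 :=
    mem_ae_iff.2 hcompl
  exact h.mono fun x hx i => hx i (Set.mem_univ i)

lemma coord_integral (i : Fin n) :
    ∫ x : Fin n → ℝ, x i ∂(Measure.pi fun _ : Fin n => P) = ∫ s, s ∂P := by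
  have h1 : (fun x : Fin n → ℝ => x i)
      = fun x => ∏ j, (fun j t => if j = i then t else (1:ℝ)) j (x j) := by
    funext x; simp [Finset.prod_ite_eq']
  rw [h1]
  rw [show (∫ x : Fin n → ℝ, ∏ j, (fun j t => if j = i then t else (1:ℝ)) j (x j)
      ∂(Measure.pi fun _ : Fin n => P))
    = ∏ j, ∫ t, (fun j t => if j = i then t else (1:ℝ)) j t ∂P
    from pi_prod_integral P (fun j t => if j = i then t else (1:ℝ))]
  have h2 : ∀ j : Fin n, (∫ t, (if j = i then t else (1:ℝ)) ∂P)
      = if j = i then (∫ s, s ∂P) else 1 := by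
    intro j; split_ifs <;> simp
  simp only [h2]
  simp [Finset.prod_ite_eq']

lemma pair_integral (i j : Fin n) :
    ∫ x : Fin n → ℝ, x i * x j ∂(Measure.pi fun _ : Fin n => P)
      = if i = j then (∫ s, s ^ 2 ∂P) else (∫ s, s ∂P) ^ 2 := by
  by_cases hij : i = j
  · subst hij
    have h1 : (fun x : Fin n → ℝ => x i * x i)
        = fun x => ∏ k, (fun k t => if k = i then t * t else (1:ℝ)) k (x k) := by
      funext x; simp [Finset.prod_ite_eq']
    rw [if_pos rfl, h1]
    rw [show (∫ x : Fin n → ℝ, ∏ k, (fun k t => if k = i then t * t else (1:ℝ)) k (x k)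
        ∂(Measure.pi fun _ : Fin n => P))
      = ∏ k, ∫ t, (fun k t => if k = i then t * t else (1:ℝ)) k t ∂P
      from pi_prod_integral P (fun k t => if k = i then t * t else (1:ℝ))]
    have h2 : ∀ k : Fin n, (∫ t, (if k = i then t * t else (1:ℝ)) ∂P)
        = if k = i then (∫ s, s ^ 2 ∂P) else 1 := by
      intro k; split_ifs <;> simp [sq]
    simp only [h2]
    simp [Finset.prod_ite_eq']
  · have h1 : (fun x : Fin n → ℝ => x i * x j)
        = fun x => ∏ k, (fun k t => if k = i then t else if k = j then t else (1:ℝ)) k (x k) := by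
      funext x; exact (prod_two hij x).symm
    rw [if_neg hij, h1]
    rw [show (∫ x : Fin n → ℝ,
        ∏ k, (fun k t => if k = i then t else if k = j then t else (1:ℝ)) k (x k)
        ∂(Measure.pi fun _ : Fin n => P))
      = ∏ k, ∫ t, (fun k t => if k = i then t else if k = j then t else (1:ℝ)) k t ∂P
      from pi_prod_integral P (fun k t => if k = i then t else if k = j then t else (1:ℝ))]
    have h2 : ∀ k : Fin n, (∫ t, (if k = i then t else if k = j then t else (1:ℝ)) ∂P)
        = if k = i then (∫ s, s ∂P) else if k = j then (∫ s, s ∂P) else 1 := by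
      intro k; split_ifs <;> simp
    simp only [h2]
    rw [prod_two hij (fun _ => ∫ s, s ∂P), sq]

end piP

lemma coord_int {n : ℕ} (P : Measure ℝ) [IsProbabilityMeasure P]
    (hsupp : P ((Set.Icc (0:ℝ) 1)ᶜ) = 0) (i : Fin n) :
    Integrable (fun x : Fin n → ℝ => x i) (Measure.pi fun _ : Fin n => P) :=
  (integrable_const (1:ℝ)).mono' (measurable_pi_apply i).aestronglyMeasurable
    ((ae_pi_mem P hsupp).mono fun x hx => by
      rw [Real.norm_eq_abs, abs_le]; exact ⟨by linarith [(hx i).1], (hx i).2⟩)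

lemma pair_int {n : ℕ} (P : Measure ℝ) [IsProbabilityMeasure P]
    (hsupp : P ((Set.Icc (0:ℝ) 1)ᶜ) = 0) (i j : Fin n) :
    Integrable (fun x : Fin n → ℝ => x i * x j) (Measure.pi fun _ : Fin n => P) :=
  (integrable_const (1:ℝ)).mono'
    (((measurable_pi_apply i).mul (measurable_pi_apply j)).aestronglyMeasurable)
    ((ae_pi_mem P hsupp).mono fun x hx => by
      rw [Real.norm_eq_abs]
      calc |x i * x j| = |x i| * |x j| := abs_mul _ _
        _ ≤ 1 * 1 := by
            gcongr <;> rw [abs_le] <;>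
              [exact ⟨by linarith [(hx i).1], (hx i).2⟩; exact ⟨by linarith [(hx j).1], (hx j).2⟩]
        _ = 1 := mul_one 1)

lemma sum_integral {n : ℕ} (P : Measure ℝ) [IsProbabilityMeasure P]
    (hsupp : P ((Set.Icc (0:ℝ) 1)ᶜ) = 0) :
    ∫ x : Fin n → ℝ, (∑ i, x i) ∂(Measure.pi fun _ : Fin n => P) = n * ∫ s, s ∂P := by
  rw [integral_finset_sum _ (fun i _ => coord_int P hsupp i)]
  simp [coord_integral P, Finset.sum_const, nsmul_eq_mul]

lemma sum_sq_integral {n : ℕ} (P : Measure ℝ) [IsProbabilityMeasure P]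
    (hsupp : P ((Set.Icc (0:ℝ) 1)ᶜ) = 0) :
    ∫ x : Fin n → ℝ, (∑ i, x i) ^ 2 ∂(Measure.pi fun _ : Fin n => P)
      = n * (∫ s, s ^ 2 ∂P) + ((n:ℝ) ^ 2 - n) * (∫ s, s ∂P) ^ 2 := by
  have hexp : (fun x : Fin n → ℝ => (∑ i, x i) ^ 2)
      = fun x => ∑ i, ∑ j, x i * x j := by
    funext x; rw [sq, Finset.sum_mul_sum]
  rw [hexp, integral_finset_sum _ (fun i _ =>
    integrable_finset_sum _ (fun j _ => pair_int P hsupp i j))]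
  have : ∀ i : Fin n, ∫ x : Fin n → ℝ, (∑ j, x i * x j) ∂(Measure.pi fun _ : Fin n => P)
      = (n:ℝ) * (∫ s, s ∂P) ^ 2 + ((∫ s, s ^ 2 ∂P) - (∫ s, s ∂P) ^ 2) := by
    intro i
    rw [integral_finset_sum _ (fun j _ => pair_int P hsupp i j)]
    have h3 : ∀ j : Fin n, ∫ x : Fin n → ℝ, x i * x j ∂(Measure.pi fun _ : Fin n => P)
        = (∫ s, s ∂P) ^ 2 + (if i = j then (∫ s, s ^ 2 ∂P) - (∫ s, s ∂P) ^ 2 else 0) := by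
      intro j; rw [pair_integral P i j]; split_ifs <;> ring
    simp only [h3]
    rw [Finset.sum_add_distrib, Finset.sum_const, Finset.sum_ite_eq, if_pos (Finset.mem_univ i)]
    simp [nsmul_eq_mul]
  simp only [this]
  rw [Finset.sum_const, Finset.card_univ, Fintype.card_fin, nsmul_eq_mul]
  ring

lemma risk_eq (n : ℕ) (hn : 0 < n) (μ : ℝ) (P : Measure ℝ) [IsProbabilityMeasure P]
    (hsupp : P ((Set.Icc (0:ℝ) 1)ᶜ) = 0) :
    ∫ x : Fin n → ℝ,
        ((μ + Real.sqrt n * ((∑ i, x i) / n)) / (1 + Real.sqrt n) - ∫ s, s ∂P) ^ 2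
        ∂(Measure.pi fun _ : Fin n => P)
    = ((μ - ∫ s, s ∂P) ^ 2 + ((∫ s, s ^ 2 ∂P) - (∫ s, s ∂P) ^ 2))
        / (1 + Real.sqrt n) ^ 2 := by
  have hs0 : (0:ℝ) ≤ Real.sqrt n := Real.sqrt_nonneg _
  have hsq : (Real.sqrt n) ^ 2 = (n:ℝ) := Real.sq_sqrt (Nat.cast_nonneg n)
  have hn' : ((n:ℝ)) ≠ 0 := Nat.cast_ne_zero.2 hn.ne'
  set s := Real.sqrt n with hsdef
  have hc : (0:ℝ) < 1 + s := by linarith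
  have hsne : s ≠ 0 := by
    intro h0
    rw [h0] at hsq
    simp at hsq
    exact hn' hsq.symm
  set m := ∫ t, t ∂P with hm
  set q := ∫ t, t ^ 2 ∂P with hq
  set A : ℝ := μ / (1 + s) - m with hA
  set B : ℝ := s / (n * (1 + s)) with hB
  have hfun : ∀ x : Fin n → ℝ,
      ((μ + s * ((∑ i, x i) / n)) / (1 + s) - m) ^ 2
      = A ^ 2 + (2 * A * B) * (∑ i, x i) + B ^ 2 * (∑ i, x i) ^ 2 := by
    intro x
    rw [hA, hB, show ((n:ℝ)) = s ^ 2 from hsq.symm]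
    field_simp
    ring
  simp only [hfun]
  have hSint : Integrable (fun x : Fin n → ℝ => ∑ i, x i) (Measure.pi fun _ : Fin n => P) :=
    integrable_finset_sum _ fun i _ => coord_int P hsupp i
  have hS2int : Integrable (fun x : Fin n → ℝ => (∑ i, x i) ^ 2)
      (Measure.pi fun _ : Fin n => P) := by
    have h : (fun x : Fin n → ℝ => (∑ i, x i) ^ 2) = fun x => ∑ i, ∑ j, x i * x j :=
      funext fun x => by rw [sq, Finset.sum_mul_sum]
    rw [h]
    exact integrable_finset_sum _ fun i _ =>
      integrable_finset_sum _ fun j _ => pair_int P hsupp i j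
  rw [integral_add (f := fun x : Fin n → ℝ => A ^ 2 + (2 * A * B) * ∑ i, x i)
      (g := fun x : Fin n → ℝ => B ^ 2 * (∑ i, x i) ^ 2)
      ((integrable_const _).add (hSint.const_mul _)) (hS2int.const_mul _),
    integral_add (f := fun _ : Fin n → ℝ => A ^ 2)
      (g := fun x : Fin n → ℝ => (2 * A * B) * ∑ i, x i)
      (integrable_const _) (hSint.const_mul _),
    integral_const_mul, integral_const_mul, integral_const, sum_integral P hsupp,
    sum_sq_integral P hsupp]
  simp only [measure_univ, ENNReal.toReal_one, probReal_univ, smul_eq_mul, one_mul, ← hm, ← hq]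
  rw [hA, hB, show ((n:ℝ)) = s ^ 2 from hsq.symm]
  field_simp
  ring

lemma bern_integral {θ : ℝ} (hθ : θ ∈ Set.Icc (0:ℝ) 1) (f : ℝ → ℝ) (hf : Measurable f) :
    ∫ x, f x ∂bern θ = (1 - θ) * f 0 + θ * f 1 := by
  have hd : ∀ a : ℝ, Integrable f (Measure.dirac a) := fun a =>
    (integrable_const ‖f a‖).mono' hf.aestronglyMeasurable
      (by rw [ae_dirac_eq]; exact Filter.eventually_pure.2 le_rfl)
  rw [bern, integral_add_measure ((hd 0).smul_measure ENNReal.ofReal_ne_top)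
      ((hd 1).smul_measure ENNReal.ofReal_ne_top),
    integral_smul_measure, integral_smul_measure, integral_dirac, integral_dirac,
    ENNReal.toReal_ofReal (by linarith [hθ.2]), ENNReal.toReal_ofReal hθ.1]
  simp [smul_eq_mul]

lemma int_id (P : Measure ℝ) [IsProbabilityMeasure P] (hsupp : P ((Set.Icc (0:ℝ) 1)ᶜ) = 0) :
    Integrable (fun s : ℝ => s) P :=
  (integrable_const (1:ℝ)).mono' measurable_id.aestronglyMeasurable
    ((ae_mem_Icc P hsupp).mono fun x hx => by
      rw [Real.norm_eq_abs, abs_le]; exact ⟨by linarith [hx.1], hx.2⟩)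

lemma int_sq (P : Measure ℝ) [IsProbabilityMeasure P] (hsupp : P ((Set.Icc (0:ℝ) 1)ᶜ) = 0) :
    Integrable (fun s : ℝ => s ^ 2) P :=
  (integrable_const (1:ℝ)).mono' (measurable_id.pow_const 2).aestronglyMeasurable
    ((ae_mem_Icc P hsupp).mono fun x hx => by
      rw [Real.norm_eq_abs, abs_le]; constructor <;> nlinarith [hx.1, hx.2])

lemma sq_le_mean (P : Measure ℝ) [IsProbabilityMeasure P]
    (hsupp : P ((Set.Icc (0:ℝ) 1)ᶜ) = 0) : (∫ s, s ^ 2 ∂P) ≤ ∫ s, s ∂P :=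
  integral_mono_ae (int_sq P hsupp) (int_id P hsupp)
    ((ae_mem_Icc P hsupp).mono fun x hx => by simp only []; nlinarith [hx.1, hx.2])

/-- For estimating the mean `Ψ(P) = ∫ x dP` of a distribution `P` on
`[0,1]` from `n` iid observations, the estimator `d₀(X) = (μ + √n·X̄)/(1+√n)` has Bayes
risk at most `μ(1-μ)/(1+√n)²` for every prior `π` with `∫ Ψ(P) dπ(P) = μ`, with equality
when `π` is supported on Bernoulli distributions. -/
theorem stmt15 (n : ℕ) (hn : 0 < n) (μ : ℝ) (hμ : μ ∈ Set.Ioo (0 : ℝ) 1)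
    (π : Measure (Measure ℝ)) [IsProbabilityMeasure π]
    (hprob : ∀ᵐ P ∂π, IsProbabilityMeasure P ∧ P ((Set.Icc (0 : ℝ) 1)ᶜ) = 0)
    (hmean : ∫ P, (∫ x, x ∂P) ∂π = μ)
    (hintmean : Integrable (fun P : Measure ℝ => ∫ x, x ∂P) π)
    (hintrisk : Integrable (fun P : Measure ℝ =>
      ∫ x : Fin n → ℝ,
        ((μ + Real.sqrt n * ((∑ i, x i) / n)) / (1 + Real.sqrt n) - ∫ s, s ∂P) ^ 2
        ∂(Measure.pi fun _ : Fin n => P)) π) :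
    (∫ P, (∫ x : Fin n → ℝ,
        ((μ + Real.sqrt n * ((∑ i, x i) / n)) / (1 + Real.sqrt n) - ∫ s, s ∂P) ^ 2
        ∂(Measure.pi fun _ : Fin n => P)) ∂π)
      ≤ μ * (1 - μ) / (1 + Real.sqrt n) ^ 2 ∧
    ((∀ᵐ P ∂π, ∃ θ ∈ Set.Icc (0 : ℝ) 1, P = bern θ) →
      (∫ P, (∫ x : Fin n → ℝ,
        ((μ + Real.sqrt n * ((∑ i, x i) / n)) / (1 + Real.sqrt n) - ∫ s, s ∂P) ^ 2
        ∂(Measure.pi fun _ : Fin n => P)) ∂π)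
      = μ * (1 - μ) / (1 + Real.sqrt n) ^ 2) := by
  obtain ⟨hμ0, hμ1⟩ := hμ
  have hs0 : (0:ℝ) ≤ Real.sqrt n := Real.sqrt_nonneg _
  have hc : (0:ℝ) < 1 + Real.sqrt n := by linarith
  have hRint : Integrable (fun P : Measure ℝ =>
      μ ^ 2 / (1 + Real.sqrt n) ^ 2
        + ((1 - 2 * μ) / (1 + Real.sqrt n) ^ 2) * ∫ x, x ∂P) π :=
    (integrable_const _).add (hintmean.const_mul _)
  have hRval : ∫ P, (μ ^ 2 / (1 + Real.sqrt n) ^ 2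
        + ((1 - 2 * μ) / (1 + Real.sqrt n) ^ 2) * ∫ x, x ∂P) ∂π
      = μ * (1 - μ) / (1 + Real.sqrt n) ^ 2 := by
    rw [integral_add (integrable_const _) (hintmean.const_mul _), integral_const_mul,
      integral_const, hmean]
    simp only [measure_univ, ENNReal.toReal_one, probReal_univ, smul_eq_mul, one_mul]
    field_simp
    ring
  constructor
  · refine le_trans (integral_mono_ae hintrisk hRint ?_) (le_of_eq hRval)
    filter_upwards [hprob] with P hP
    obtain ⟨h1, h2⟩ := hP
    haveI := h1
    rw [risk_eq n hn μ P h2]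
    have hle := sq_le_mean P h2
    have key : (μ - ∫ s, s ∂P) ^ 2 + ((∫ s, s ^ 2 ∂P) - (∫ s, s ∂P) ^ 2)
        ≤ μ ^ 2 + (1 - 2 * μ) * ∫ s, s ∂P := by nlinarith [hle]
    calc ((μ - ∫ s, s ∂P) ^ 2 + ((∫ s, s ^ 2 ∂P) - (∫ s, s ∂P) ^ 2)) / (1 + Real.sqrt n) ^ 2
        ≤ (μ ^ 2 + (1 - 2 * μ) * ∫ s, s ∂P) / (1 + Real.sqrt n) ^ 2 := by
          exact div_le_div_of_nonneg_right key (by positivity) |>.trans_eq rfl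
      _ = μ ^ 2 / (1 + Real.sqrt n) ^ 2
          + ((1 - 2 * μ) / (1 + Real.sqrt n) ^ 2) * ∫ s, s ∂P := by ring
  · intro hbern
    have heq : ∀ᵐ P ∂π, (∫ x : Fin n → ℝ,
        ((μ + Real.sqrt n * ((∑ i, x i) / n)) / (1 + Real.sqrt n) - ∫ s, s ∂P) ^ 2
        ∂(Measure.pi fun _ : Fin n => P))
        = μ ^ 2 / (1 + Real.sqrt n) ^ 2
          + ((1 - 2 * μ) / (1 + Real.sqrt n) ^ 2) * ∫ x, x ∂P := by
      filter_upwards [hprob, hbern] with P hP hB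
      obtain ⟨h1, h2⟩ := hP
      obtain ⟨θ, hθ, rfl⟩ := hB
      haveI := h1
      have hm : (∫ s, s ∂bern θ) = θ := by
        simpa using bern_integral hθ (fun s => s) measurable_id
      have hq : (∫ s, s ^ 2 ∂bern θ) = θ := by
        have h := bern_integral hθ (fun s => s ^ 2) (measurable_id.pow_const 2)
        norm_num at h
        simpa using h
      rw [risk_eq n hn μ _ h2, hm, hq]
      field_simp
      ring
    rw [integral_congr_ae heq, hRval]
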